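/- Let m be a positive integer, p, k positive integers, κ = 2p/k, c ≤ 0, and define φ(τ) = (κ/(m+1))(1+τ) − ((κ−2)(m+1)τ + κ)/((1+τ)^m (m+1)) + (c/((m+1)(m+2)))·(((m+2)τ + 1)/(1+τ)^m − (1+τ)²). Then φ(0) = 0, φ'(0) = 2, and φ(τ) > 0 for all τ > 0. -/

import Mathlib

theorem profile_with_initial_slope_two
    (m p k : ℕ) (hm : 0 < m) (hp : 0 < p) (hk : 0 < k)
    (κ c : ℝ) (hκ : κ = 2 * p / k) (hc : c ≤ 0)
    (φ : ℝ → ℝ)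
    (hφ : ∀ τ : ℝ, φ τ = κ / (m + 1) * (1 + τ)
        - ((κ - 2) * (m + 1) * τ + κ) / ((1 + τ) ^ m * (m + 1))
        + c / ((m + 1) * (m + 2)) * (((m + 2) * τ + 1) / (1 + τ) ^ m - (1 + τ) ^ 2)) :
    φ 0 = 0 ∧ deriv φ 0 = 2 ∧ ∀ τ : ℝ, 0 < τ → 0 < φ τ := by
  have hm1 : (0:ℝ) < (m:ℝ) + 1 := by positivity
  have hm2 : (0:ℝ) < (m:ℝ) + 2 := by positivity
  have hκpos : 0 < κ := by
    have hp' : (0:ℝ) < p := by exact_mod_cast hp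
    have hk' : (0:ℝ) < k := by exact_mod_cast hk
    rw [hκ]; positivity
  refine ⟨?_, ?_, ?_⟩
  · rw [hφ]; norm_num
  · have hfun : φ = fun τ : ℝ => κ / (m + 1) * (1 + τ)
        - ((κ - 2) * (m + 1) * τ + κ) / ((1 + τ) ^ m * (m + 1))
        + c / ((m + 1) * (m + 2)) * (((m + 2) * τ + 1) / (1 + τ) ^ m - (1 + τ) ^ 2) :=
      funext hφ
    rw [hfun]
    have h1 : HasDerivAt (fun τ : ℝ => 1 + τ) 1 (0:ℝ) := by
      simpa using (hasDerivAt_id (0:ℝ)).const_add (1:ℝ)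
    have hpow : HasDerivAt (fun τ : ℝ => (1 + τ) ^ m) ((m:ℝ)) (0:ℝ) := by
      simpa using h1.fun_pow m
    have hden : HasDerivAt (fun τ : ℝ => (1 + τ) ^ m * ((m:ℝ) + 1)) ((m:ℝ) * ((m:ℝ)+1)) (0:ℝ) := by
      simpa using hpow.mul_const ((m:ℝ)+1)
    have hdenne : (1 + (0:ℝ)) ^ m * ((m:ℝ) + 1) ≠ 0 := by norm_num; positivity
    have hN : HasDerivAt (fun τ : ℝ => (κ - 2) * ((m:ℝ) + 1) * τ + κ)
        ((κ - 2) * ((m:ℝ) + 1)) (0:ℝ) := by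
      simpa using ((hasDerivAt_id (0:ℝ)).const_mul ((κ - 2) * ((m:ℝ)+1))).add_const κ
    have hT1 : HasDerivAt (fun τ : ℝ => κ / ((m:ℝ) + 1) * (1 + τ)) (κ / ((m:ℝ)+1)) (0:ℝ) := by
      simpa using h1.const_mul (κ / ((m:ℝ)+1))
    have hT2 := hN.fun_div hden hdenne
    have hP : HasDerivAt (fun τ : ℝ => ((m:ℝ) + 2) * τ + 1) ((m:ℝ) + 2) (0:ℝ) := by
      simpa using ((hasDerivAt_id (0:ℝ)).const_mul ((m:ℝ)+2)).add_const (1:ℝ)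
    have hQne : (1 + (0:ℝ)) ^ m ≠ 0 := by norm_num
    have hT3a := hP.fun_div hpow hQne
    have hsq : HasDerivAt (fun τ : ℝ => (1 + τ) ^ 2) (2:ℝ) (0:ℝ) := by
      simpa using h1.fun_pow 2
    have hT3 := ((hT3a.fun_sub hsq).const_mul (c / (((m:ℝ)+1) * ((m:ℝ)+2))))
    have H := (hT1.fun_sub hT2).fun_add hT3
    rw [H.deriv]
    have hmne : ((m:ℝ) + 1) ≠ 0 := ne_of_gt hm1
    have hmne2 : ((m:ℝ) + 2) ≠ 0 := ne_of_gt hm2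
    field_simp
    ring
  · intro τ hτ
    have hup : (0:ℝ) < 1 + τ := by linarith
    have hupow : (0:ℝ) < (1 + τ) ^ m := pow_pos hup m
    have hB1 : 1 + ((m:ℝ) + 1) * τ ≤ (1 + τ) ^ (m + 1) := by
      have := one_add_mul_le_pow (a := τ) (by linarith) (m + 1)
      push_cast at this ⊢
      linarith
    have hB2 : 1 + ((m:ℝ) + 2) * τ ≤ (1 + τ) ^ (m + 2) := by
      have := one_add_mul_le_pow (a := τ) (by linarith) (m + 2)
      push_cast at this ⊢
      linarith
    rw [hφ]
    have hA : 0 < κ / ((m:ℝ) + 1) * (1 + τ)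
        - ((κ - 2) * ((m:ℝ) + 1) * τ + κ) / ((1 + τ) ^ m * ((m:ℝ) + 1)) := by
      rw [sub_pos, div_lt_iff₀ (by positivity)]
      have heq : κ / ((m:ℝ) + 1) * (1 + τ) * ((1 + τ) ^ m * ((m:ℝ) + 1))
          = κ * (1 + τ) ^ (m + 1) := by
        field_simp; ring
      rw [heq]
      have h2 : κ * (1 + ((m:ℝ)+1) * τ) ≤ κ * (1 + τ) ^ (m + 1) :=
        mul_le_mul_of_nonneg_left hB1 hκpos.le
      nlinarith [mul_pos hm1 hτ]
    have hX : (((m:ℝ) + 2) * τ + 1) / (1 + τ) ^ m - (1 + τ) ^ 2 ≤ 0 := by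
      rw [sub_nonpos, div_le_iff₀ hupow]
      have : (1 + τ) ^ 2 * (1 + τ) ^ m = (1 + τ) ^ (m + 2) := by ring
      rw [this]
      linarith
    have hB : 0 ≤ c / (((m:ℝ) + 1) * ((m:ℝ) + 2)) *
        ((((m:ℝ) + 2) * τ + 1) / (1 + τ) ^ m - (1 + τ) ^ 2) := by
      have hd : c / (((m:ℝ) + 1) * ((m:ℝ) + 2)) ≤ 0 :=
        div_nonpos_of_nonpos_of_nonneg hc (by positivity)
      nlinarith [mul_nonneg (neg_nonneg.2 hd) (neg_nonneg.2 hX)]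
    push_cast
    linarith
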